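/- Let G = F₂ ≀ S₃ with F₂ the free group on x, y and S₃ = ⟨s₁, s₂ | s₁² = s₂² = (s₁s₂)³ = 1⟩, and let S = {x, y, s₁, s₂, c} with c = s₁s₂ be the generating set of G where x, y generate the copy of F₂ at the coordinate indexed by the identity of S₃. Then every element of the base subgroup F₂⁶ = ∏_{σ∈S₃} F₂ of G can be written as a product of at most 18 palindromes with respect to S. -/

import Mathlib

section PalindromicWidth

/-- `g` is a palindrome with respect to the (symmetric) generating set `X`:
some word over `X` representing `g` equals its own reverse. -/
def IsPalindrome {G : Type*} [Group G] (X : Set G) (g : G) : Prop :=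
  ∃ w : List G, (∀ a ∈ w, a ∈ X) ∧ w.reverse = w ∧ w.prod = g

/-- The palindromic length of `g` with respect to `X`, valued in `ℕ∞`:
the least `k` such that `g` is a product of `k` palindromes. -/
noncomputable def palLength {G : Type*} [Group G] (X : Set G) (g : G) : ℕ∞ :=
  sInf {k : ℕ∞ | ∃ L : List G, (L.length : ℕ∞) = k ∧ (∀ p ∈ L, IsPalindrome X p) ∧ L.prod = g}

/-- The palindromic width `pw(G, X) = sup_{g ∈ G} l_P(g)`, valued in `ℕ∞`. -/
noncomputable def palWidth (G : Type*) [Group G] (X : Set G) : ℕ∞ :=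
  ⨆ g : G, palLength X g

end PalindromicWidth

/-- The permutation action of `K` on the base group `K → H` of the wreath product
`H ≀ K`, by left translation on the index set: `(k • f) k' = f (k⁻¹ * k')`. -/
def wreathAction (H K : Type*) [Group H] [Group K] : K →* MulAut (K → H) where
  toFun k :=
    { toFun := fun f x => f (k⁻¹ * x)
      invFun := fun f x => f (k * x)
      left_inv := fun f => by funext x; simp [← mul_assoc]
      right_inv := fun f => by funext x; simp [← mul_assoc]
      map_mul' := fun f g => rfl }
  map_one' := by
    ext f x
    simp
  map_mul' := fun a b => by
    ext f x
    simp [mul_assoc]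

/-- The wreath product `H ≀ K = (∏_{k ∈ K} H) ⋊ K`. -/
abbrev WreathProduct (H K : Type*) [Group H] [Group K] :=
  SemidirectProduct (K → H) K (wreathAction H K)

/-- The symmetric group `S₃`, realized as the permutations of `Fin 3`. -/
abbrev S3 := Equiv.Perm (Fin 3)

/-- The wreath product `G = F₂ ≀ S₃`. -/
abbrev F2wrS3 := WreathProduct (FreeGroup (Fin 2)) S3

/-- The generator `x` of the copy of `F₂` at the coordinate indexed by `1 ∈ S₃`. -/
def genX : F2wrS3 := SemidirectProduct.inl (Pi.mulSingle (1 : S3) (FreeGroup.of 0))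

/-- The generator `y` of the copy of `F₂` at the coordinate indexed by `1 ∈ S₃`. -/
def genY : F2wrS3 := SemidirectProduct.inl (Pi.mulSingle (1 : S3) (FreeGroup.of 1))

/-- The generator `s₁` (a standard involution of `S₃`). -/
def genS1 : F2wrS3 := SemidirectProduct.inr (Equiv.swap 0 1)

/-- The generator `s₂` (a standard involution of `S₃`). -/
def genS2 : F2wrS3 := SemidirectProduct.inr (Equiv.swap 1 2)

/-- The generator `c = s₁ s₂`. -/
def genC : F2wrS3 := SemidirectProduct.inr (Equiv.swap 0 1 * Equiv.swap 1 2)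

/-- The generating set `S = {x, y, s₁, s₂, c}` of `F₂ ≀ S₃`, together with inverses. -/
def genSet : Set F2wrS3 :=
  {genX, genY, genS1, genS2, genC} ∪ {genX, genY, genS1, genS2, genC}⁻¹

namespace Pal18

abbrev FG := FreeGroup (Fin 2)
abbrev Ltr := (Fin 2) × Bool

def gen (l : Ltr) : FG := cond l.2 (FreeGroup.of l.1) (FreeGroup.of l.1)⁻¹

def linv (l : Ltr) : Ltr := (l.1, !l.2)

@[simp] lemma linv_linv (l : Ltr) : linv (linv l) = l := by
  cases l with | mk i b => cases b <;> rfl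

@[simp] lemma linv_fst (l : Ltr) : (linv l).1 = l.1 := rfl

lemma gen_linv (l : Ltr) : gen (linv l) = (gen l)⁻¹ := by
  cases l with | mk i b => cases b <;> simp [gen, linv]

lemma mk_single (l : Ltr) : FreeGroup.mk [l] = gen l := by
  cases l with | mk i b =>
    cases b
    · have h : (FreeGroup.mk [(i, true)])⁻¹ = FreeGroup.mk (FreeGroup.invRev [(i, true)]) :=
        FreeGroup.inv_mk
      have h2 : FreeGroup.invRev [(i, true)] = [(i, false)] := by
        simp [FreeGroup.invRev]
      rw [h2] at h
      rw [← h]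
      rfl
    · rfl

lemma mk_cons (l : Ltr) (L : List Ltr) :
    FreeGroup.mk (l :: L) = gen l * FreeGroup.mk L := by
  rw [← mk_single, FreeGroup.mul_mk]
  rfl

lemma mk_append_last (L : List Ltr) (l : Ltr) :
    FreeGroup.mk (L ++ [l]) = FreeGroup.mk L * gen l := by
  rw [← mk_single, FreeGroup.mul_mk]

/-- Generalized-palindrome trees. -/
inductive GT where
  | nil : GT
  | cen : Ltr → GT
  | wr : Ltr → Bool → GT → GT

def fval : GT → FG
  | .nil => 1
  | .cen l => gen l
  | .wr l false t => gen l * fval t * gen l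
  | .wr l true t => gen l * fval t * (gen l)⁻¹

/-- `wrX a b t` : opens with `gen b`, closes with `gen (linv a)`; valid when `a.1 = b.1`. -/
def wrX (a b : Ltr) (t : GT) : GT := .wr b (decide (a = b)) t

lemma wrX_val {a b : Ltr} (h : a.1 = b.1) (t : GT) :
    fval (wrX a b t) = gen b * fval t * gen (linv a) := by
  by_cases hab : a = b
  · subst hab
    simp [wrX, fval, gen_linv]
  · have hb : b = linv a := by
      cases a with | mk i s =>
      cases b with | mk j u =>
      simp only at h
      subst h
      cases s <;> cases u <;> simp_all [linv]
    have hd : decide (a = b) = false := by simp [hab]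
    simp only [wrX, hd, fval]
    rw [hb]

def chainW (X : List Ltr) (t : GT) : GT := X.foldr (fun l s => .wr l false s) t

def splitAdj : List Ltr → Option (List Ltr × Ltr × Ltr × List Ltr)
  | a :: b :: R =>
      if a.1 = b.1 then some ([], a, b, R)
      else (splitAdj (b :: R)).map fun x => (a :: x.1, x.2)
  | _ => none

lemma splitAdj_some : ∀ {V : List Ltr} {X : List Ltr} {a b : Ltr} {Y : List Ltr},
    splitAdj V = some (X, a, b, Y) → V = X ++ a :: b :: Y ∧ a.1 = b.1
  | [], _, _, _, _, h => by simp [splitAdj] at h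
  | [l], _, _, _, _, h => by simp [splitAdj] at h
  | a' :: b' :: R, X, a, b, Y, h => by
      by_cases hty : a'.1 = b'.1
      · rw [splitAdj, if_pos hty] at h
        have h' : ([], a', b', R) = ((X, a, b, Y) : List Ltr × Ltr × Ltr × List Ltr) :=
          Option.some.inj h
        obtain ⟨h1, h2, h3, h4⟩ : [] = X ∧ a' = a ∧ b' = b ∧ R = Y := by
          simpa [Prod.ext_iff] using h'
        subst h1; subst h2; subst h3; subst h4
        exact ⟨rfl, hty⟩
      · rw [splitAdj, if_neg hty, Option.map_eq_some_iff] at h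
        obtain ⟨⟨X', p, q, Y'⟩, hrec, heq⟩ := h
        obtain ⟨hv, hty2⟩ := splitAdj_some hrec
        obtain ⟨h1, h2, h3, h4⟩ : a' :: X' = X ∧ p = a ∧ q = b ∧ Y' = Y := by
          simpa [Prod.ext_iff] using heq
        subst h1; subst h2; subst h3; subst h4
        refine ⟨?_, hty2⟩
        simpa using congrArg (a' :: ·) hv

lemma splitAdj_none : ∀ {V : List Ltr}, splitAdj V = none →
    List.Chain' (fun p q : Ltr => p.1 ≠ q.1) V
  | [], _ => List.isChain_nil
  | [l], _ => List.isChain_singleton _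
  | a :: b :: R, h => by
      by_cases hty : a.1 = b.1
      · rw [splitAdj, if_pos hty] at h; exact absurd h (by simp)
      · rw [splitAdj, if_neg hty, Option.map_eq_none_iff] at h
        exact List.isChain_cons_cons.mpr ⟨hty, splitAdj_none h⟩

lemma fin2_trich : ∀ x y z : Fin 2, y ≠ z → (x = y ↔ ¬ x = z) := by decide

lemma chain_last : ∀ (V : List Ltr) (a : Ltr)
    (_ : List.Chain' (fun p q : Ltr => p.1 ≠ q.1) (a :: V)) (h2 : V ≠ []),
    ((V.getLast h2).1 = a.1 ↔ Even V.length)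
  | [], _, _, h2 => absurd rfl h2
  | b :: W, a, hch, _ => by
      rcases List.isChain_cons_cons.mp hch with ⟨hab, hch'⟩
      cases W with
      | nil =>
          simp only [List.getLast, List.length]
          constructor
          · intro h; exact absurd h.symm hab
          · intro h; exact absurd h (by simp [Nat.even_iff])
      | cons w W' =>
          have IH := chain_last (w :: W') b hch' (by simp)
          have hlast : (b :: w :: W').getLast (by simp) = (w :: W').getLast (by simp) := by
            simp [List.getLast]
          rw [hlast]
          have htr := fin2_trich ((w :: W').getLast (by simp)).1 a.1 b.1 hab
          rw [htr, IH]
          simp only [List.length_cons]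
          simp [Nat.even_add_one]

lemma chainW_cons (x : Ltr) (L : List Ltr) (t : GT) :
    chainW (x :: L) t = .wr x false (chainW L t) := rfl

lemma chain_val : ∀ (X : List Ltr) (a b : Ltr) (Y : List Ltr) (T : GT),
    a.1 = b.1 → fval T = FreeGroup.mk (Y ++ X.map linv) →
    fval (chainW (X ++ [a]) (wrX a b T)) = FreeGroup.mk (X ++ a :: b :: Y)
  | [], a, b, Y, T, hab, hT => by
      simp only [List.nil_append, chainW_cons, chainW, List.foldr, fval]
      have : chainW [] (wrX a b T) = wrX a b T := rfl
      rw [wrX_val hab T, hT]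
      simp only [List.map_nil, List.append_nil] at hT ⊢
      rw [hT] at *
      rw [gen_linv, mk_cons, mk_cons]
      group
  | x :: X', a, b, Y, T, hab, hT => by
      have hT' : fval T = FreeGroup.mk ((Y ++ [linv x]) ++ X'.map linv) := by
        rw [hT]; simp
      have IH := chain_val X' a b (Y ++ [linv x]) T hab hT'
      have hc : (x :: X') ++ [a] = x :: (X' ++ [a]) := rfl
      rw [hc, chainW_cons]
      show gen x * fval (chainW (X' ++ [a]) (wrX a b T)) * gen x = _
      rw [IH]
      have h2 : X' ++ a :: b :: (Y ++ [linv x]) = (X' ++ a :: b :: Y) ++ [linv x] := by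
        simp
      rw [h2, mk_append_last, gen_linv]
      have h3 : (x :: X') ++ a :: b :: Y = x :: (X' ++ a :: b :: Y) := rfl
      rw [h3, mk_cons]
      group

def mkT (V : List Ltr) : GT :=
  match V with
  | [] => .nil
  | [l] => .cen l
  | l₁ :: l₂ :: rest =>
    match hs : splitAdj (l₁ :: l₂ :: rest) with
    | some (X, a, b, Y) =>
        chainW (X ++ [a]) (wrX a b (mkT (Y ++ X.map linv)))
    | none =>
        wrX (linv ((l₂ :: rest).getLast (by simp))) l₁ (mkT ((l₂ :: rest).dropLast))
  termination_by V.length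
  decreasing_by
  · have hv := (splitAdj_some hs).1
    have : (l₁ :: l₂ :: rest).length = X.length + 2 + Y.length := by
      rw [hv]; simp; omega
    simp only [List.length_append, List.length_map]
    omega
  · simp only [List.length_dropLast, List.length_cons]
    omega

theorem mkT_val : ∀ (V : List Ltr), Odd V.length → fval (mkT V) = FreeGroup.mk V
  | [], hodd => by simp at hodd
  | [l], _ => by
      rw [mkT, fval, mk_single]
  | l₁ :: l₂ :: rest, hodd => by
      rw [mkT]
      split
      · rename_i X a b Y hs
        obtain ⟨hv, hab⟩ := splitAdj_some hs
        have hlen : (l₁ :: l₂ :: rest).length = X.length + 2 + Y.length := by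
          rw [hv]; simp; omega
        have hodd' : Odd (Y ++ X.map linv).length := by
          simp only [List.length_append, List.length_map]
          rcases hodd with ⟨k, hk⟩
          rw [hlen] at hk
          exact ⟨k - 1, by omega⟩
        have hdec : (Y ++ X.map linv).length < (l₁ :: l₂ :: rest).length := by
          simp only [List.length_append, List.length_map]
          omega
        have IH := mkT_val (Y ++ X.map linv) hodd'
        rw [chain_val X a b Y _ hab IH, hv]
      · rename_i hs
        have hch := splitAdj_none hs
        set R := l₂ :: rest with hR
        have hRne : R ≠ [] := by simp [hR]
        have hlen2 : R.length = rest.length + 1 := by simp [hR]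
        rcases hodd with ⟨k, hk⟩
        simp only [List.length_cons] at hk
        have heven : Even R.length := by
          exact ⟨k, by omega⟩
        have hty : ((R.getLast hRne).1 = l₁.1) := (chain_last R l₁ hch hRne).mpr heven
        have hodd' : Odd R.dropLast.length := by
          rw [List.length_dropLast, hlen2]
          exact ⟨k - 1, by omega⟩
        have hdec2 : R.dropLast.length < (l₁ :: l₂ :: rest).length := by
          rw [List.length_dropLast, hlen2]
          simp only [List.length_cons]
          omega
        have IH := mkT_val R.dropLast hodd'
        have hwr : (linv (R.getLast hRne)).1 = l₁.1 := by simpa using hty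
        rw [wrX_val hwr, IH, linv_linv]
        have hsplit : R = R.dropLast ++ [R.getLast hRne] := (List.dropLast_append_getLast hRne).symm
        conv_rhs => rw [show (l₁ :: l₂ :: rest) = l₁ :: R from rfl, hsplit]
        rw [mk_cons, mk_append_last]
        group
  termination_by V => V.length
  decreasing_by
  · exact hdec
  · exact hdec2



def iL : (S3 → FG) →* F2wrS3 := SemidirectProduct.inl
def iR : S3 →* F2wrS3 := SemidirectProduct.inr
def sing (σ : S3) (g : FG) : S3 → FG := Pi.mulSingle σ g
def eL (l : Ltr) : F2wrS3 := iL (sing 1 (gen l))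

def pa : S3 := Equiv.swap 0 1
def pb : S3 := Equiv.swap 1 2
def pc : S3 := pa * pb

lemma act_sing (σ τ : S3) (w : FG) :
    (wreathAction (FreeGroup (Fin 2)) S3 σ) (sing τ w) = sing (σ * τ) w := by
  funext x
  show sing τ w (σ⁻¹ * x) = sing (σ * τ) w x
  simp only [sing, Pi.mulSingle_apply]
  congr 1
  simp only [eq_iff_iff]
  constructor
  · intro h; rw [← h]; group
  · intro h; rw [h]; group

lemma inr_mul_inl (σ : S3) (F : S3 → FG) :
    iR σ * iL F = iL ((wreathAction (FreeGroup (Fin 2)) S3 σ) F) * iR σ := by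
  unfold iL iR
  rw [SemidirectProduct.inl_aut (φ := wreathAction (FreeGroup (Fin 2)) S3) σ F]
  rw [mul_assoc _ (SemidirectProduct.inr σ⁻¹), ← map_mul]
  simp

lemma conj_inl (σ : S3) (w : FG) :
    iR σ * iL (sing 1 w) * iR σ⁻¹ = iL (sing σ w) := by
  unfold iL iR
  have h := SemidirectProduct.inl_aut (φ := wreathAction (FreeGroup (Fin 2)) S3) σ (sing 1 w)
  rw [act_sing, mul_one] at h
  exact h.symm

@[simp] lemma sing_mul (σ : S3) (a b : FG) : sing σ a * sing σ b = sing σ (a * b) := by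
  funext x
  by_cases h : x = σ <;> simp [sing, Pi.mulSingle_apply, h]

@[simp] lemma sing_one (σ : S3) : sing σ (1 : FG) = 1 := by
  funext x
  by_cases h : x = σ <;> simp [sing, Pi.mulSingle_apply, h]

def A6 : List F2wrS3 := [genS1, genS2, genC, genS1, genS2, genC]
def G6 : List F2wrS3 := [genC, genS2, genS1, genC, genS2, genS1]

lemma genS1_eq : genS1 = iR pa := rfl
lemma genS2_eq : genS2 = iR pb := rfl
lemma genC_eq : genC = iR pc := rfl

lemma A6_prod : A6.prod = iR pc := by
  have h : pa * (pb * (pc * (pa * (pb * (pc * 1))))) = pc := by decide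
  simp only [A6, List.prod_cons, List.prod_nil, genS1_eq, genS2_eq, genC_eq, ← map_mul, ← map_one iR]
  rw [h]

lemma G6_prod : G6.prod = 1 := by
  have h : pc * (pb * (pa * (pc * (pb * (pa * 1))))) = 1 := by decide
  simp only [G6, List.prod_cons, List.prod_nil, genS1_eq, genS2_eq, genC_eq, ← map_mul, ← map_one iR]
  rw [h]

lemma A6_rev : A6.reverse = G6 := by simp [A6, G6]
lemma G6_rev : G6.reverse = A6 := by simp [A6, G6]

def PRE (l : Ltr) : List F2wrS3 := A6 ++ [eL (linv l), genC⁻¹, eL l] ++ G6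
def SUF (l : Ltr) : List F2wrS3 := A6 ++ [eL l, genC⁻¹, eL (linv l)] ++ G6

lemma PRE_rev (l : Ltr) : (PRE l).reverse = SUF l := by
  simp [PRE, SUF, A6, G6]
lemma SUF_rev (l : Ltr) : (SUF l).reverse = PRE l := by
  simp [PRE, SUF, A6, G6]

def toL : GT → List F2wrS3
  | .nil => []
  | .cen l => [eL l]
  | .wr l false t => eL l :: (toL t ++ [eL l])
  | .wr l true t => PRE l ++ toL t ++ SUF l

lemma toL_rev : ∀ t : GT, (toL t).reverse = toL t
  | .nil => rfl
  | .cen l => rfl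
  | .wr l false t => by
      simp [toL, toL_rev t]
  | .wr l true t => by
      simp [toL, toL_rev t, PRE_rev, SUF_rev]

lemma genX_mem : genX ∈ genSet := by left; simp
lemma genY_mem : genY ∈ genSet := by left; simp
lemma genS1_mem : genS1 ∈ genSet := by left; simp
lemma genS2_mem : genS2 ∈ genSet := by left; simp
lemma genC_mem : genC ∈ genSet := by left; simp
lemma genXi_mem : genX⁻¹ ∈ genSet := by right; simp
lemma genYi_mem : genY⁻¹ ∈ genSet := by right; simp
lemma genCi_mem : genC⁻¹ ∈ genSet := by right; simp

lemma eL_mem (l : Ltr) : eL l ∈ genSet := by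
  have hx : eL (0, true) = genX := rfl
  have hy : eL (1, true) = genY := rfl
  have hxi : eL (0, false) = genX⁻¹ := by
    show iL (sing 1 (FreeGroup.of 0)⁻¹) = genX⁻¹
    have : sing 1 (FreeGroup.of 0)⁻¹ = (sing 1 (FreeGroup.of 0))⁻¹ := Pi.mulSingle_inv _ _
    rw [this, map_inv]
    rfl
  have hyi : eL (1, false) = genY⁻¹ := by
    show iL (sing 1 (FreeGroup.of 1)⁻¹) = genY⁻¹
    have : sing 1 (FreeGroup.of 1)⁻¹ = (sing 1 (FreeGroup.of 1))⁻¹ := Pi.mulSingle_inv _ _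
    rw [this, map_inv]
    rfl
  cases l with | mk i b =>
    have hi : i = 0 ∨ i = 1 := by omega
    rcases hi with rfl|rfl <;> cases b
    · rw [hxi]; exact genXi_mem
    · rw [hx]; exact genX_mem
    · rw [hyi]; exact genYi_mem
    · rw [hy]; exact genY_mem

lemma A6_mem : ∀ p ∈ A6, p ∈ genSet := by
  intro p hp
  simp only [A6, List.mem_cons, List.not_mem_nil, or_false] at hp
  rcases hp with rfl|rfl|rfl|rfl|rfl|rfl <;>
    first | exact genS1_mem | exact genS2_mem | exact genC_mem

lemma G6_mem : ∀ p ∈ G6, p ∈ genSet := by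
  intro p hp
  simp only [G6, List.mem_cons, List.not_mem_nil, or_false] at hp
  rcases hp with rfl|rfl|rfl|rfl|rfl|rfl <;>
    first | exact genS1_mem | exact genS2_mem | exact genC_mem

lemma PRE_mem (l : Ltr) : ∀ p ∈ PRE l, p ∈ genSet := by
  intro p hp
  simp only [PRE, List.mem_append, List.mem_cons, List.not_mem_nil, or_false] at hp
  rcases hp with (hp|rfl|rfl|rfl)|hp
  · exact A6_mem p hp
  · exact eL_mem _
  · exact genCi_mem
  · exact eL_mem _
  · exact G6_mem p hp

lemma SUF_mem (l : Ltr) : ∀ p ∈ SUF l, p ∈ genSet := by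
  intro p hp
  simp only [SUF, List.mem_append, List.mem_cons, List.not_mem_nil, or_false] at hp
  rcases hp with (hp|rfl|rfl|rfl)|hp
  · exact A6_mem p hp
  · exact eL_mem _
  · exact genCi_mem
  · exact eL_mem _
  · exact G6_mem p hp

lemma toL_mem : ∀ t : GT, ∀ p ∈ toL t, p ∈ genSet
  | .nil => by simp [toL]
  | .cen l => by
      intro p hp
      simp only [toL, List.mem_singleton] at hp
      subst hp; exact eL_mem l
  | .wr l false t => by
      intro p hp
      simp only [toL, List.mem_cons, List.mem_append, List.mem_singleton,
        List.not_mem_nil, or_false] at hp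
      rcases hp with rfl|hp|rfl
      · exact eL_mem l
      · exact toL_mem t p hp
      · exact eL_mem l
  | .wr l true t => by
      intro p hp
      simp only [toL, List.mem_append] at hp
      rcases hp with (hp|hp)|hp
      · exact PRE_mem l p hp
      · exact toL_mem t p hp
      · exact SUF_mem l p hp



lemma act_act (u v : S3) (G : S3 → FG) :
    (wreathAction (FreeGroup (Fin 2)) S3 u) ((wreathAction (FreeGroup (Fin 2)) S3 v) G)
      = (wreathAction (FreeGroup (Fin 2)) S3 (u * v)) G := by
  rw [map_mul]
  rfl

lemma sandwich (u v : S3) (F G : S3 → FG) :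
    iR u * (iL F * (iR v * iL G)) =
      iL ((wreathAction (FreeGroup (Fin 2)) S3 u) F *
          (wreathAction (FreeGroup (Fin 2)) S3 (u * v)) G) * iR (u * v) := by
  rw [inr_mul_inl v G, ← mul_assoc (iL F), ← map_mul iL, ← mul_assoc (iR u), inr_mul_inl u]
  rw [map_mul (wreathAction (FreeGroup (Fin 2)) S3 u), act_act]
  rw [map_mul iL, mul_assoc, mul_assoc, ← map_mul iR, ← mul_assoc]

lemma genCinv_eq : genC⁻¹ = iR pc⁻¹ := by
  rw [genC_eq, ← map_inv]

lemma act_sing' (σ τ : S3) (w : FG) :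
    (wreathAction (FreeGroup (Fin 2)) S3 σ) (sing τ w) = sing (σ * τ) w := act_sing σ τ w

lemma PRE_prod (l : Ltr) :
    (PRE l).prod = iL (sing pc (gen (linv l)) * sing 1 (gen l)) := by
  rw [PRE, List.prod_append, List.prod_append, A6_prod, G6_prod, mul_one]
  simp only [List.prod_cons, List.prod_nil, mul_one]
  rw [genCinv_eq]
  rw [show eL (linv l) = iL (sing 1 (gen (linv l))) from rfl,
      show eL l = iL (sing 1 (gen l)) from rfl]
  rw [sandwich pc pc⁻¹]
  rw [act_sing', act_sing', mul_one, mul_inv_cancel]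
  simp

lemma SUF_prod (l : Ltr) :
    (SUF l).prod = iL (sing pc (gen l) * sing 1 (gen (linv l))) := by
  rw [SUF, List.prod_append, List.prod_append, A6_prod, G6_prod, mul_one]
  simp only [List.prod_cons, List.prod_nil, mul_one]
  rw [genCinv_eq]
  rw [show eL (linv l) = iL (sing 1 (gen (linv l))) from rfl,
      show eL l = iL (sing 1 (gen l)) from rfl]
  rw [sandwich pc pc⁻¹]
  rw [act_sing', act_sing', mul_one, mul_inv_cancel]
  simp

lemma one_ne_pc : (1 : S3) ≠ pc := by decide

lemma sing_collapse (g w : FG) :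
    (sing pc g⁻¹ * sing 1 g) * sing 1 w * (sing pc g * sing 1 g⁻¹) = sing 1 (g * w * g⁻¹) := by
  funext x
  by_cases h1 : x = 1
  · subst h1
    simp [sing, Pi.mulSingle_apply, one_ne_pc]
  · by_cases hc : x = pc
    · subst hc
      simp [sing, Pi.mulSingle_apply, Ne.symm one_ne_pc]
    · simp [sing, Pi.mulSingle_apply, h1, hc]

theorem toL_prod : ∀ t : GT, (toL t).prod = iL (sing 1 (fval t))
  | .nil => by simp [toL, fval]
  | .cen l => by simp [toL, fval, eL]
  | .wr l false t => by
      have IH := toL_prod t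
      simp only [toL, List.prod_cons, List.prod_append, List.prod_cons, List.prod_nil, mul_one, IH]
      rw [show eL l = iL (sing 1 (gen l)) from rfl, ← map_mul, ← map_mul]
      simp only [sing_mul, fval]
      rw [mul_assoc]
  | .wr l true t => by
      have IH := toL_prod t
      simp only [toL, List.prod_append, IH, PRE_prod, SUF_prod]
      rw [← map_mul, ← map_mul]
      rw [gen_linv]
      rw [show fval (GT.wr l true t) = gen l * fval t * (gen l)⁻¹ from rfl]
      congr 1
      rw [← sing_collapse (gen l) (fval t)]

lemma block_rev (W : List F2wrS3) (t : GT) :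
    (W ++ toL t ++ W.reverse).reverse = W ++ toL t ++ W.reverse := by
  simp [List.reverse_append, toL_rev t, List.append_assoc]

lemma block_prod (W : List F2wrS3) (u : S3) (hW : W.prod = iR u)
    (hWr : W.reverse.prod = iR u⁻¹) (t : GT) :
    (W ++ toL t ++ W.reverse).prod = iL (sing u (fval t)) := by
  rw [List.prod_append, List.prod_append, hW, hWr, toL_prod t]
  rw [conj_inl]

lemma block_ispal (W : List F2wrS3) (hmem : ∀ p ∈ W, p ∈ genSet) (t : GT) :
    IsPalindrome genSet ((W ++ toL t ++ W.reverse).prod) := by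
  refine ⟨W ++ toL t ++ W.reverse, ?_, block_rev W t, rfl⟩
  intro p hp
  simp only [List.mem_append, List.mem_reverse] at hp
  rcases hp with (hp|hp)|hp
  · exact hmem p hp
  · exact toL_mem t p hp
  · exact hmem p hp

/-- Two palindromes realizing any single-coordinate base element. -/
lemma coord_pals (u : S3) (W : List F2wrS3) (hW : W.prod = iR u)
    (hWr : W.reverse.prod = iR u⁻¹) (hmem : ∀ p ∈ W, p ∈ genSet) (g : FG) :
    ∃ p₁ p₂ : F2wrS3, IsPalindrome genSet p₁ ∧ IsPalindrome genSet p₂ ∧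
      p₁ * p₂ = iL (sing u g) := by
  have hg : FreeGroup.mk (FreeGroup.toWord g) = g := FreeGroup.mk_toWord
  rcases Nat.even_or_odd (FreeGroup.toWord g).length with he|ho
  · cases hV : FreeGroup.toWord g with
    | nil =>
        have hg1 : g = 1 := by rw [← hg, hV]; rfl
        refine ⟨(W ++ toL .nil ++ W.reverse).prod, (W ++ toL .nil ++ W.reverse).prod,
          block_ispal W hmem .nil, block_ispal W hmem .nil, ?_⟩
        rw [block_prod W u hW hWr, hg1]
        simp [fval]
    | cons l V' =>
        have hodd : Odd V'.length := by
          rw [hV] at he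
          simp only [List.length_cons] at he
          rcases he with ⟨k, hk⟩
          exact ⟨k - 1, by omega⟩
        refine ⟨(W ++ toL (.cen l) ++ W.reverse).prod, (W ++ toL (mkT V') ++ W.reverse).prod,
          block_ispal W hmem _, block_ispal W hmem _, ?_⟩
        rw [block_prod W u hW hWr, block_prod W u hW hWr, ← map_mul, sing_mul]
        rw [show fval (.cen l) = gen l from rfl, mkT_val V' hodd]
        rw [← mk_cons, ← hV, hg]
  · refine ⟨(W ++ toL (mkT (FreeGroup.toWord g)) ++ W.reverse).prod,
      (W ++ toL .nil ++ W.reverse).prod,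
      block_ispal W hmem _, block_ispal W hmem _, ?_⟩
    rw [block_prod W u hW hWr, block_prod W u hW hWr, ← map_mul, sing_mul]
    rw [mkT_val _ ho, hg]
    simp [fval]


lemma iR_one : (1 : F2wrS3) = iR 1 := (map_one iR).symm

lemma W1_prod : ([] : List F2wrS3).prod = iR 1 := by rw [List.prod_nil, map_one]
lemma W1_revprod : (([] : List F2wrS3)).reverse.prod = iR (1 : S3)⁻¹ := by
  simp [map_one]
lemma W1_mem : ∀ p ∈ ([] : List F2wrS3), p ∈ genSet := by simp

lemma W2_prod : ([genS1] : List F2wrS3).prod = iR pa := by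
  simp [genS1_eq]
lemma W2_revprod : ([genS1] : List F2wrS3).reverse.prod = iR pa⁻¹ := by
  simp only [List.reverse_singleton, List.prod_cons, List.prod_nil, mul_one, genS1_eq]
  all_goals congr 1
  all_goals decide
lemma W2_mem : ∀ p ∈ ([genS1] : List F2wrS3), p ∈ genSet := by
  simp only [List.mem_singleton]
  rintro p rfl; exact genS1_mem

lemma W3_prod : ([genS2] : List F2wrS3).prod = iR pb := by
  simp [genS2_eq]
lemma W3_revprod : ([genS2] : List F2wrS3).reverse.prod = iR pb⁻¹ := by
  simp only [List.reverse_singleton, List.prod_cons, List.prod_nil, mul_one, genS2_eq]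
  all_goals congr 1
  all_goals decide
lemma W3_mem : ∀ p ∈ ([genS2] : List F2wrS3), p ∈ genSet := by
  simp only [List.mem_singleton]
  rintro p rfl; exact genS2_mem

lemma W4_prod : ([genS1, genS2, genS1] : List F2wrS3).prod = iR (pa*pb*pa) := by
  simp only [List.prod_cons, List.prod_nil, mul_one, genS1_eq, genS2_eq, ← map_mul]
  all_goals congr 1
  all_goals group
lemma W4_revprod : ([genS1, genS2, genS1] : List F2wrS3).reverse.prod = iR (pa*pb*pa)⁻¹ := by
  have h : ([genS1, genS2, genS1] : List F2wrS3).reverse = [genS1, genS2, genS1] := by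
    simp
  rw [h, W4_prod]
  all_goals congr 1
  all_goals decide
lemma W4_mem : ∀ p ∈ ([genS1, genS2, genS1] : List F2wrS3), p ∈ genSet := by
  intro p hp
  simp only [List.mem_cons, List.not_mem_nil, or_false] at hp
  rcases hp with rfl|rfl|rfl
  · exact genS1_mem
  · exact genS2_mem
  · exact genS1_mem

lemma W5_prod : ([genS1, genS2] : List F2wrS3).prod = iR pc := by
  simp only [List.prod_cons, List.prod_nil, mul_one, genS1_eq, genS2_eq, ← map_mul]
  all_goals rfl
lemma W5_revprod : ([genS1, genS2] : List F2wrS3).reverse.prod = iR pc⁻¹ := by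
  simp only [List.reverse_cons, List.reverse_nil, List.nil_append, List.cons_append,
    List.prod_cons, List.prod_nil, mul_one, genS1_eq, genS2_eq, ← map_mul]
  all_goals congr 1
  all_goals decide
lemma W5_mem : ∀ p ∈ ([genS1, genS2] : List F2wrS3), p ∈ genSet := by
  intro p hp
  simp only [List.mem_cons, List.not_mem_nil, or_false] at hp
  rcases hp with rfl|rfl
  · exact genS1_mem
  · exact genS2_mem

lemma W6_prod : ([genS2, genS1] : List F2wrS3).prod = iR (pb*pa) := by
  simp only [List.prod_cons, List.prod_nil, mul_one, genS1_eq, genS2_eq, ← map_mul]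
  all_goals rfl
lemma W6_revprod : ([genS2, genS1] : List F2wrS3).reverse.prod = iR (pb*pa)⁻¹ := by
  simp only [List.reverse_cons, List.reverse_nil, List.nil_append, List.cons_append,
    List.prod_cons, List.prod_nil, mul_one, genS1_eq, genS2_eq, ← map_mul]
  all_goals congr 1
  all_goals decide
lemma W6_mem : ∀ p ∈ ([genS2, genS1] : List F2wrS3), p ∈ genSet := by
  intro p hp
  simp only [List.mem_cons, List.not_mem_nil, or_false] at hp
  rcases hp with rfl|rfl
  · exact genS2_mem
  · exact genS1_mem

lemma sing_total (f : S3 → FG) :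
    sing 1 (f 1) * (sing pa (f pa) * (sing pb (f pb) * (sing (pa*pb*pa) (f (pa*pb*pa)) *
      (sing pc (f pc) * sing (pb*pa) (f (pb*pa)))))) = f := by
  funext x
  have hx := (by decide :
    ∀ y : S3, y = 1 ∨ y = pa ∨ y = pb ∨ y = pa*pb*pa ∨ y = pc ∨ y = pb*pa) x
  rcases hx with rfl|rfl|rfl|rfl|rfl|rfl
  · simp only [Pi.mul_apply, sing, Pi.mulSingle_apply]
    rw [if_neg (show ¬((1 : S3) = pa) by decide), if_neg (show ¬((1 : S3) = pb) by decide), if_neg (show ¬((1 : S3) = pa*pb*pa) by decide), if_neg (show ¬((1 : S3) = pc) by decide), if_neg (show ¬((1 : S3) = pb*pa) by decide)]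
    simp
  · simp only [Pi.mul_apply, sing, Pi.mulSingle_apply]
    rw [if_neg (show ¬(pa = (1 : S3)) by decide), if_neg (show ¬(pa = pb) by decide), if_neg (show ¬(pa = pa*pb*pa) by decide), if_neg (show ¬(pa = pc) by decide), if_neg (show ¬(pa = pb*pa) by decide)]
    simp
  · simp only [Pi.mul_apply, sing, Pi.mulSingle_apply]
    rw [if_neg (show ¬(pb = (1 : S3)) by decide), if_neg (show ¬(pb = pa) by decide), if_neg (show ¬(pb = pa*pb*pa) by decide), if_neg (show ¬(pb = pc) by decide), if_neg (show ¬(pb = pb*pa) by decide)]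
    simp
  · simp only [Pi.mul_apply, sing, Pi.mulSingle_apply]
    rw [if_neg (show ¬(pa*pb*pa = (1 : S3)) by decide), if_neg (show ¬(pa*pb*pa = pa) by decide), if_neg (show ¬(pa*pb*pa = pb) by decide), if_neg (show ¬(pa*pb*pa = pc) by decide), if_neg (show ¬(pa*pb*pa = pb*pa) by decide)]
    simp
  · simp only [Pi.mul_apply, sing, Pi.mulSingle_apply]
    rw [if_neg (show ¬(pc = (1 : S3)) by decide), if_neg (show ¬(pc = pa) by decide), if_neg (show ¬(pc = pb) by decide), if_neg (show ¬(pc = pa*pb*pa) by decide), if_neg (show ¬(pc = pb*pa) by decide)]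
    simp
  · simp only [Pi.mul_apply, sing, Pi.mulSingle_apply]
    rw [if_neg (show ¬(pb*pa = (1 : S3)) by decide), if_neg (show ¬(pb*pa = pa) by decide), if_neg (show ¬(pb*pa = pb) by decide), if_neg (show ¬(pb*pa = pa*pb*pa) by decide), if_neg (show ¬(pb*pa = pc) by decide)]
    simp

end Pal18




open Pal18 in
/-- Lemma 5: every element of the base subgroup `F₂⁶ = ∏_{σ ∈ S₃} F₂` of `F₂ ≀ S₃`
is a product of at most `18` palindromes with respect to `S = {x, y, s₁, s₂, c}`. -/
theorem base_prod_of_18_palindromes (f : S3 → FreeGroup (Fin 2)) :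
    ∃ L : List F2wrS3, L.length ≤ 18 ∧ (∀ p ∈ L, IsPalindrome genSet p) ∧
      L.prod = SemidirectProduct.inl f := by
  obtain ⟨a1, a2, ha1, ha2, ha⟩ := coord_pals 1 [] W1_prod W1_revprod W1_mem (f 1)
  obtain ⟨b1, b2, hb1, hb2, hb⟩ := coord_pals pa [genS1] W2_prod W2_revprod W2_mem (f pa)
  obtain ⟨c1, c2, hc1, hc2, hc⟩ := coord_pals pb [genS2] W3_prod W3_revprod W3_mem (f pb)
  obtain ⟨d1, d2, hd1, hd2, hd⟩ :=
    coord_pals (pa*pb*pa) [genS1, genS2, genS1] W4_prod W4_revprod W4_mem (f (pa*pb*pa))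
  obtain ⟨e1, e2, he1, he2, he⟩ := coord_pals pc [genS1, genS2] W5_prod W5_revprod W5_mem (f pc)
  obtain ⟨g1, g2, hg1, hg2, hg⟩ :=
    coord_pals (pb*pa) [genS2, genS1] W6_prod W6_revprod W6_mem (f (pb*pa))
  refine ⟨[a1, a2, b1, b2, c1, c2, d1, d2, e1, e2, g1, g2], by simp, ?_, ?_⟩
  · intro p hp
    simp only [List.mem_cons, List.not_mem_nil, or_false] at hp
    rcases hp with rfl|rfl|rfl|rfl|rfl|rfl|rfl|rfl|rfl|rfl|rfl|rfl <;>
      assumption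
  · simp only [List.prod_cons, List.prod_nil, mul_one]
    rw [← mul_assoc a1 a2, ha, ← mul_assoc b1 b2, hb, ← mul_assoc c1 c2, hc,
        ← mul_assoc d1 d2, hd, ← mul_assoc e1 e2, he, hg]
    rw [← map_mul, ← map_mul, ← map_mul, ← map_mul, ← map_mul]
    rw [sing_total f]
    rfl
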